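/- The map (ρ,σ) ↦ Tr(ρ σ^{-1} ρ) - 1 (the χ² divergence for α ∈ {0,1}) is jointly convex on pairs of positive definite density matrices: for density matrices ρ₁,ρ₂,σ₁,σ₂ and λ ∈ [0,1], Tr(ρ̄ σ̄⁻¹ ρ̄) ≤ λ Tr(ρ₁σ₁⁻¹ρ₁) + (1-λ) Tr(ρ₂σ₂⁻¹ρ₂), where ρ̄ = λρ₁+(1-λ)ρ₂, σ̄ = λσ₁+(1-λ)σ₂. -/

import Mathlib

open Matrix ComplexOrder


variable {m : Type*} [Fintype m]

lemma psd_smul {A : Matrix m m ℂ} (hA : A.PosSemidef) {c : ℝ} (hc : 0 ≤ c) :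
    (c • A).PosSemidef := by
  refine posSemidef_iff_dotProduct_mulVec.mpr ⟨?_, fun x => ?_⟩
  · unfold Matrix.IsHermitian
    rw [conjTranspose_smul, hA.1, star_trivial]
  · rw [smul_mulVec, dotProduct_smul]
    exact smul_nonneg hc ((posSemidef_iff_dotProduct_mulVec.mp hA).2 x)

lemma pd_smul {A : Matrix m m ℂ} (hA : A.PosDef) {c : ℝ} (hc : 0 < c) :
    (c • A).PosDef := by
  refine posDef_iff_dotProduct_mulVec.mpr ⟨(psd_smul hA.posSemidef hc.le).1, fun x hx => ?_⟩
  rw [smul_mulVec, dotProduct_smul]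
  exact smul_pos hc (hA.dotProduct_mulVec_pos hx)

lemma pd_convex {A B : Matrix m m ℂ} (hA : A.PosDef) (hB : B.PosDef) {l : ℝ}
    (h0 : 0 ≤ l) (h1 : l ≤ 1) : (l • A + (1 - l) • B).PosDef := by
  rcases h0.eq_or_lt with h | h
  · rw [← h]; simpa using hB
  · exact (pd_smul hA h).add_posSemidef (psd_smul hB.posSemidef (by linarith))

lemma psd_trace [DecidableEq m] {A : Matrix m m ℂ} (hA : A.PosSemidef) : 0 ≤ A.trace := by
  rw [Matrix.trace]
  refine Finset.sum_nonneg fun i _ => ?_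
  have := (posSemidef_iff_dotProduct_mulVec.mp hA).2 (Pi.single i 1)
  simpa [dotProduct, Pi.single_apply] using this

lemma psd_block_self [DecidableEq m] {A B : Matrix m m ℂ} (hA : A.PosDef) (hB : B.IsHermitian) :
    (fromBlocks A B Bᴴ (Bᴴ * A⁻¹ * B)).PosSemidef := by
  have := hA.isUnit.invertible
  rw [Matrix.PosDef.fromBlocks₁₁ B (Bᴴ * A⁻¹ * B) hA, sub_self]
  exact Matrix.PosSemidef.zero

/-- Joint convexity of `(ρ,σ) ↦ Tr(ρ σ⁻¹ ρ) - 1` (the `χ²` divergence for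
`α ∈ {0,1}`) on pairs of positive definite density matrices. -/
theorem chi_sq_convex_alpha_zero {n : ℕ} (ρ₁ ρ₂ σ₁ σ₂ : Matrix (Fin n) (Fin n) ℂ)
    (hρ₁ : ρ₁.PosDef) (hρ₂ : ρ₂.PosDef) (hσ₁ : σ₁.PosDef) (hσ₂ : σ₂.PosDef)
    (hρ₁t : ρ₁.trace = 1) (hρ₂t : ρ₂.trace = 1) (hσ₁t : σ₁.trace = 1) (hσ₂t : σ₂.trace = 1)
    (l : ℝ) (hl0 : 0 ≤ l) (hl1 : l ≤ 1) :
    (((l • ρ₁ + (1 - l) • ρ₂) * (l • σ₁ + (1 - l) • σ₂)⁻¹ *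
        (l • ρ₁ + (1 - l) • ρ₂)).trace).re ≤
      l * ((ρ₁ * σ₁⁻¹ * ρ₁).trace).re + (1 - l) * ((ρ₂ * σ₂⁻¹ * ρ₂).trace).re := by
  set ρ := l • ρ₁ + (1 - l) • ρ₂ with hρ_def
  set σ := l • σ₁ + (1 - l) • σ₂ with hσ_def
  set C := l • (ρ₁ * σ₁⁻¹ * ρ₁) + (1 - l) • (ρ₂ * σ₂⁻¹ * ρ₂) with hC_def
  have hl1' : (0:ℝ) ≤ 1 - l := by linarith
  have hσpd : σ.PosDef := pd_convex hσ₁ hσ₂ hl0 hl1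
  have hρH : ρᴴ = ρ := by
    rw [hρ_def, conjTranspose_add, conjTranspose_smul, conjTranspose_smul,
      hρ₁.1.eq, hρ₂.1.eq, star_trivial, star_trivial]
  have hM : (fromBlocks σ ρ ρᴴ C).PosSemidef := by
    have h1 := psd_block_self (B := ρ₁) hσ₁ hρ₁.1
    have h2 := psd_block_self (B := ρ₂) hσ₂ hρ₂.1
    have := (psd_smul h1 hl0).add (psd_smul h2 hl1')
    rw [Matrix.fromBlocks_smul, Matrix.fromBlocks_smul, Matrix.fromBlocks_add] at this
    convert this using 2
    · rw [hρ₁.1.eq, hρ₂.1.eq]; exact hρH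
    · rw [hρ₁.1.eq, hρ₂.1.eq]
  have := hσpd.isUnit.invertible
  have hkey : (C - ρᴴ * σ⁻¹ * ρ).PosSemidef :=
    (Matrix.PosDef.fromBlocks₁₁ ρ C hσpd).mp hM
  rw [hρH] at hkey
  have htr := psd_trace hkey
  rw [Matrix.trace_sub, hC_def, Matrix.trace_add, Matrix.trace_smul, Matrix.trace_smul] at htr
  have hre := (Complex.le_def.mp htr).1
  simp only [Complex.sub_re, Complex.add_re, Complex.zero_re, Complex.real_smul,
    Complex.re_ofReal_mul] at hre
  linarith
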